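/- Let L be generated by a finite automaton P = (Q, Σ, δ, q₀) (as the set of strings s with δ(q₀, s) defined), and let H be the sub-automaton of P restricted to a subset Q_H ⊆ Q of legal states with q₀ ∈ Q_H. If no state q ∈ Q_H is 'bad'—where q is bad if there exists an uncontrollable event σ with δ(q,σ) defined in Q but δ(q,σ) ∉ Q_H, and for all forcible events σ_f, δ(q,σ_f) ∉ Q_H—then K = L(H) is F-controllable with respect to L, Σ_c, Σ_f. -/

import Mathlib

variable {E : Type*}

/-- A language `K` is F-controllable w.r.t. plant `L`, controllable events `Sc`
and forcible events `Sf`. -/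
def FContr (L K : Set (List E)) (Sc Sf : Set E) : Prop :=
  ∀ s ∈ K, ∀ σ : E, s ++ [σ] ∈ L → s ++ [σ] ∉ K →
    σ ∈ Sc ∨ ∃ σf ∈ Sf, s ++ [σf] ∈ K

/-- A language is prefix-closed. -/
def PrefixClosed (M : Set (List E)) : Prop :=
  ∀ s ∈ M, ∀ t : List E, t <+: s → t ∈ M

/-- Closed-loop language of supervisor `S` over plant `M`. -/
inductive CL (S : List E → Set E) (M : Set (List E)) : List E → Prop
  | nil : CL S M []
  | snoc {s : List E} {σ : E} : CL S M s → s ++ [σ] ∈ M → σ ∈ S s → CL S M (s ++ [σ])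

-- Natural projection onto subalphabet `A`: erase letters outside `A`.
open Classical in
noncomputable def proj (A : Set E) : List E → List E
  | [] => []
  | a :: s => if a ∈ A then a :: proj A s else proj A s

-- Run of a deterministic partial automaton on a string.
def run {Q : Type*} (δ : Q → E → Option Q) (q : Q) (s : List E) : Option Q :=
  s.foldl (fun o σ => o.bind (fun q' => δ q' σ)) (some q)

-- Transition function of the sub-automaton restricted to legal states `QH`.
open Classical in
noncomputable def restrictδ {Q : Type*} (δ : Q → E → Option Q) (QH : Set Q)
    (q : Q) (σ : E) : Option Q :=
  if q ∈ QH then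
    (δ q σ).bind (fun q' => if q' ∈ QH then some q' else none)
  else none

lemma run_snoc {Q : Type*} (δ : Q → E → Option Q) (q : Q) (s : List E) (σ : E) :
    run δ q (s ++ [σ]) = (run δ q s).bind (fun q' => δ q' σ) := by
  simp [run, List.foldl_append]

lemma run_restrict {Q : Type*} (δ : Q → E → Option Q) (QH : Set Q) (q0 : Q)
    (hq0 : q0 ∈ QH) :
    ∀ s q, run (restrictδ δ QH) q0 s = some q → q ∈ QH ∧ run δ q0 s = some q := by
  intro s
  induction s using List.reverseRecOn with
  | nil => intro q h; simp [run] at h ⊢; simp [← h, hq0]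
  | append_singleton s σ ih =>
    intro q h
    rw [run_snoc] at h
    obtain ⟨p, hp, hstep⟩ := Option.bind_eq_some_iff.mp h
    obtain ⟨hpQH, hrun⟩ := ih p hp
    simp only [restrictδ, hpQH, if_pos] at hstep
    obtain ⟨q', hq', hif⟩ := Option.bind_eq_some_iff.mp hstep
    by_cases hmem : q' ∈ QH
    · simp [hmem] at hif
      subst hif
      refine ⟨hmem, ?_⟩
      rw [run_snoc, hrun]
      simpa using hq'
    · simp [hmem] at hif

theorem no_bad_state_implies_FControllable {Q : Type*}
    (δ : Q → E → Option Q) (q0 : Q) (Sc Sf : Set E) (QH : Set Q)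
    (hq0 : q0 ∈ QH)
    (hnobad : ¬ ∃ q ∈ QH,
        (∃ σ, σ ∉ Sc ∧ ∃ q', δ q σ = some q' ∧ q' ∉ QH) ∧
        (∀ σf ∈ Sf, ∀ q', δ q σf = some q' → q' ∉ QH)) :
    FContr {s | (run δ q0 s).isSome}
      {s | (run (restrictδ δ QH) q0 s).isSome} Sc Sf := by
  intro s hs σ hL hK
  simp only [Set.mem_setOf_eq] at hs hL hK
  obtain ⟨q, hq⟩ := Option.isSome_iff_exists.mp hs
  obtain ⟨hqQH, hrun⟩ := run_restrict δ QH q0 hq0 s q hq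
  -- δ q σ is defined and leaves QH
  rw [run_snoc, hrun] at hL
  obtain ⟨q', hq'⟩ := Option.isSome_iff_exists.mp hL
  simp only [Option.bind_some] at hq'
  have hq'not : q' ∉ QH := by
    intro hmem
    apply hK
    rw [run_snoc, hq, Option.bind_some]
    simp [restrictδ, hqQH, hq', hmem]
  by_cases hc : σ ∈ Sc
  · exact Or.inl hc
  · right
    push_neg at hnobad
    obtain ⟨σf, hσf, q'', hq'', hq''QH⟩ : ∃ σf ∈ Sf, ∃ q'', δ q σf = some q'' ∧ q'' ∈ QH := by
      have := hnobad q hqQH ⟨σ, hc, q', hq', hq'not⟩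
      exact this
    refine ⟨σf, hσf, ?_⟩
    show (run (restrictδ δ QH) q0 (s ++ [σf])).isSome
    rw [run_snoc, hq, Option.bind_some]
    simp [restrictδ, hqQH, hq'', hq''QH]
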